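/- Let x be a (k−1)-opetope, α a k-opetope, and γ_1, γ_2 generating face maps x → α. If γ_1 = γ_2 as morphisms of O, then γ_1 = γ_2 as elements of the generating set G_k; in other words, the relations in O do not identify distinct generating face maps. -/

import Mathlib

open CategoryTheory

/-- The data from which the category `O` of opetopes is presented: for each `k` the
category `O_k` of `k`-opetopes; for each `(k+1)`-opetope `α` a set `G k x α` of generating
face maps from each of its `(k-1)`-dimensional faces `x`; for each face map `γ : x → α`
and morphism `g : α ⟶ β` of `O_{k+1}` the unique restriction of `g` to the specified face
(a `(k)`-morphism `x ⟶ y` together with the corresponding face map `y → β`); and the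
identifications of faces where composition occurs, recorded as a relation `Ident` on
composable pairs of face maps mediated by an object-morphism `f : x ⟶ y`. -/
structure OpData where
  Obj : ℕ → Type
  [cat : ∀ k, SmallCategory (Obj k)]
  G : ∀ k, Obj k → Obj (k + 1) → Type
  restr : ∀ {k : ℕ} {x : Obj k} {α β : Obj (k + 1)},
    G k x α → (α ⟶ β) → Σ y : Obj k, (x ⟶ y) × G k y β
  Ident : ∀ {k : ℕ} {x y : Obj k} {α β : Obj (k + 1)} {θ : Obj (k + 2)},
    G k x α → G (k + 1) α θ → G k y β → G (k + 1) β θ → (x ⟶ y) → Prop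

attribute [instance] OpData.cat

/-- Objects of the category of opetopes: opetopes of all dimensions. -/
def OpData.TotalObj (D : OpData) : Type := Σ k, D.Obj k

/-- Generating morphisms of the category of opetopes: the morphisms of each `O_k`, and the
generating face maps. -/
inductive OpData.Gen (D : OpData) : D.TotalObj → D.TotalObj → Type
  | ofHom {k : ℕ} {a b : D.Obj k} : (a ⟶ b) → D.Gen ⟨k, a⟩ ⟨k, b⟩
  | face {k : ℕ} {x : D.Obj k} {α : D.Obj (k + 1)} : D.G k x α → D.Gen ⟨k, x⟩ ⟨k + 1, α⟩

instance (D : OpData) : Quiver D.TotalObj := ⟨D.Gen⟩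

/-- The relations of the presentation of the category of opetopes:
1. face maps commute with restrictions of morphisms of `O_{k+1}`;
2. faces are identified where composition occurs;
3. composition in each `O_k` is respected;
4. identities in each `O_k` are respected. -/
inductive OpData.Rel (D : OpData) :
    ∀ ⦃a b : Paths D.TotalObj⦄, (a ⟶ b) → (a ⟶ b) → Prop
  | rel1 {k : ℕ} {x : D.Obj k} {α β : D.Obj (k + 1)} (γ : D.G k x α) (g : α ⟶ β) :
      OpData.Rel D
        ((Quiver.Hom.toPath (OpData.Gen.face γ)).comp (Quiver.Hom.toPath (OpData.Gen.ofHom g)))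
        ((Quiver.Hom.toPath (OpData.Gen.ofHom (D.restr γ g).2.1)).comp
          (Quiver.Hom.toPath (OpData.Gen.face (D.restr γ g).2.2)))
  | rel2 {k : ℕ} {x y : D.Obj k} {α β : D.Obj (k + 1)} {θ : D.Obj (k + 2)}
      (γ₁ : D.G k x α) (γ₂ : D.G (k + 1) α θ) (γ₃ : D.G k y β) (γ₄ : D.G (k + 1) β θ)
      (f : x ⟶ y) (h : D.Ident γ₁ γ₂ γ₃ γ₄ f) :
      OpData.Rel D
        ((Quiver.Hom.toPath (OpData.Gen.face γ₁)).comp (Quiver.Hom.toPath (OpData.Gen.face γ₂)))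
        ((Quiver.Hom.toPath (OpData.Gen.ofHom f)).comp
          ((Quiver.Hom.toPath (OpData.Gen.face γ₃)).comp (Quiver.Hom.toPath (OpData.Gen.face γ₄))))
  | rel3 {k : ℕ} {a b c : D.Obj k} (f : a ⟶ b) (g : b ⟶ c) :
      OpData.Rel D
        ((Quiver.Hom.toPath (OpData.Gen.ofHom f)).comp (Quiver.Hom.toPath (OpData.Gen.ofHom g)))
        (Quiver.Hom.toPath (OpData.Gen.ofHom (f ≫ g)))
  | rel4 {k : ℕ} (a : D.Obj k) :
      OpData.Rel D (Quiver.Hom.toPath (OpData.Gen.ofHom (𝟙 a))) Quiver.Path.nil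

/-- The relations as a `HomRel` on the free category on the generators. -/
def OpData.relO (D : OpData) : HomRel (Paths D.TotalObj) := @fun a b f g => @OpData.Rel D a b f g

/-- The category `O = Opetope` of opetopes, presented by generators and relations. -/
abbrev OpData.O (D : OpData) := CategoryTheory.Quotient D.relO

/-- The inclusion of `O_k` into `O`. -/
def OpData.incl (D : OpData) (k : ℕ) : D.Obj k ⥤ D.O where
  obj a := ⟨⟨k, a⟩⟩
  map f := (CategoryTheory.Quotient.functor D.relO).map (Quiver.Hom.toPath (OpData.Gen.ofHom f))
  map_id a := by
    have h := CategoryTheory.Quotient.sound D.relO (OpData.Rel.rel4 (D := D) a)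
    exact h.trans (CategoryTheory.Functor.map_id _ _)
  map_comp f g := by
    have h := CategoryTheory.Quotient.sound D.relO (OpData.Rel.rel3 (D := D) f g)
    exact h.symm.trans (CategoryTheory.Functor.map_comp _ _ _)


/-! ### Auxiliary machinery for the proof -/

namespace OpetopeProof

open OpData

/-- Normal forms for morphisms of the free category on the generators. -/
inductive Inv (D : OpData) : D.TotalObj → D.TotalObj → Type
  | hom {k : ℕ} {a b : D.Obj k} (f : a ⟶ b) : Inv D ⟨k, a⟩ ⟨k, b⟩
  | fc {k : ℕ} {x y : D.Obj k} {β : D.Obj (k + 1)} (f : x ⟶ y) (γ : D.G k y β) :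
      Inv D ⟨k, x⟩ ⟨k + 1, β⟩
  | high {k m : ℕ} {a : D.Obj k} {b : D.Obj m} (h : k + 2 ≤ m) : Inv D ⟨k, a⟩ ⟨m, b⟩

variable {D : OpData}

/-- Composition of normal forms. -/
def Inv.comp : ∀ {A B C : D.TotalObj}, Inv D A B → Inv D B C → Inv D A C
  | _, _, _, .hom f, .hom g => .hom (f ≫ g)
  | _, _, _, .hom f, .fc f' γ => .fc (f ≫ f') γ
  | _, _, _, .hom _, .high h => .high h
  | _, _, _, .fc f γ, .hom g => .fc (f ≫ (D.restr γ g).2.1) (D.restr γ g).2.2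
  | _, _, _, .fc _ _, .fc _ _ => .high (by omega)
  | _, _, _, .fc _ _, .high h' => .high (by omega)
  | _, _, _, .high h, .hom _ => .high h
  | _, _, _, .high h, .fc _ _ => .high (by omega)
  | _, _, _, .high h, .high h' => .high (by omega)

/-- The identity normal form. -/
def Inv.idI : ∀ (A : D.TotalObj), Inv D A A
  | ⟨_, a⟩ => .hom (𝟙 a)

theorem Inv.id_comp : ∀ {A B : D.TotalObj} (v : Inv D A B), (Inv.idI A).comp v = v := by
  rintro A B (f | ⟨f, γ⟩ | h) <;> simp [Inv.comp, Inv.idI]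

section

variable (hid : ∀ {k : ℕ} {x : D.Obj k} {α : D.Obj (k + 1)} (γ : D.G k x α),
      D.restr γ (𝟙 α) = ⟨x, 𝟙 x, γ⟩)
variable (hcomp : ∀ {k : ℕ} {x : D.Obj k} {α β δ : D.Obj (k + 1)}
      (γ : D.G k x α) (g : α ⟶ β) (g' : β ⟶ δ),
      D.restr γ (g ≫ g') =
        ⟨(D.restr (D.restr γ g).2.2 g').1,
         (D.restr γ g).2.1 ≫ (D.restr (D.restr γ g).2.2 g').2.1,
         (D.restr (D.restr γ g).2.2 g').2.2⟩)

include hid in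
theorem Inv.comp_id : ∀ {A B : D.TotalObj} (v : Inv D A B), v.comp (Inv.idI B) = v := by
  rintro A B (f | ⟨f, γ⟩ | h)
  · simp [Inv.comp, Inv.idI]
  · show Inv.fc (f ≫ (D.restr γ (𝟙 _)).2.1) (D.restr γ (𝟙 _)).2.2 = Inv.fc f γ
    rw [hid]
    simp
  · rfl

include hid hcomp in
theorem Inv.comp_assoc : ∀ {A B C E : D.TotalObj} (u : Inv D A B) (v : Inv D B C)
    (w : Inv D C E), (u.comp v).comp w = u.comp (v.comp w) := by
  rintro A B C E (f | ⟨f, γ⟩ | h) (f' | ⟨f', γ'⟩ | h') (f'' | ⟨f'', γ''⟩ | h'') <;>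
    try rfl
  · simp [Inv.comp]
  · simp [Inv.comp]
  · simp [Inv.comp]
  · show Inv.fc ((f ≫ (D.restr γ f').2.1) ≫ (D.restr (D.restr γ f').2.2 f'').2.1)
        (D.restr (D.restr γ f').2.2 f'').2.2 =
      Inv.fc (f ≫ (D.restr γ (f' ≫ f'')).2.1) (D.restr γ (f' ≫ f'')).2.2
    rw [hcomp]
    simp

/-- Evaluation of a generator. -/
def evalGen : ∀ {A B : D.TotalObj}, D.Gen A B → Inv D A B
  | _, _, .ofHom f => .hom f
  | _, _, .face γ => .fc (𝟙 _) γ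

/-- Evaluation of a path. -/
def evalPath {A : D.TotalObj} : ∀ {B : D.TotalObj}, Quiver.Path A B → Inv D A B
  | _, .nil => Inv.idI A
  | _, .cons p e => (evalPath p).comp (evalGen e)

include hid hcomp in
theorem evalPath_comp {A B C : D.TotalObj} (p : Quiver.Path A B) (q : Quiver.Path B C) :
    evalPath (p.comp q) = (evalPath p).comp (evalPath q) := by
  induction q with
  | nil => simp [evalPath, Inv.comp_id hid]
  | cons q e ih =>
      simp only [Quiver.Path.comp_cons, evalPath, ih]
      rw [Inv.comp_assoc hid hcomp]

theorem evalPath_rel {A B : Paths D.TotalObj} {p q : A ⟶ B} (h : D.Rel p q) :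
    evalPath p = evalPath q := by
  cases h with
  | rel1 γ g =>
      show ((Inv.idI _).comp (evalGen (Gen.face γ))).comp (evalGen (Gen.ofHom g)) =
        ((Inv.idI _).comp (evalGen (Gen.ofHom (D.restr γ g).2.1))).comp
          (evalGen (Gen.face (D.restr γ g).2.2))
      simp [evalPath, Quiver.Hom.toPath, evalGen, Inv.comp, Inv.idI]
  | rel2 γ₁ γ₂ γ₃ γ₄ f hI =>
      show ((Inv.idI _).comp (evalGen (Gen.face γ₁))).comp (evalGen (Gen.face γ₂)) =
        (((Inv.idI _).comp (evalGen (Gen.ofHom f))).comp (evalGen (Gen.face γ₃))).comp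
          (evalGen (Gen.face γ₄))
      simp [evalPath, Quiver.Hom.toPath, evalGen, Inv.comp, Inv.idI]
  | rel3 f g =>
      show ((Inv.idI _).comp (evalGen (Gen.ofHom f))).comp (evalGen (Gen.ofHom g)) =
        (Inv.idI _).comp (evalGen (Gen.ofHom (f ≫ g)))
      simp [evalPath, Quiver.Hom.toPath, evalGen, Inv.comp, Inv.idI]
  | rel4 a =>
      simp [evalPath, Quiver.Hom.toPath, evalGen, Inv.comp, Inv.idI]

include hid hcomp in
theorem evalPath_compClosure {A B : Paths D.TotalObj} {p q : A ⟶ B}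
    (h : HomRel.CompClosure D.relO p q) : evalPath p = evalPath q := by
  cases h with
  | intro _ _ f m₁ m₂ g hr =>
      show evalPath (Quiver.Path.comp f (Quiver.Path.comp m₁ g)) =
        evalPath (Quiver.Path.comp f (Quiver.Path.comp m₂ g))
      erw [evalPath_comp hid hcomp, evalPath_comp hid hcomp,
          evalPath_comp hid hcomp, evalPath_comp hid hcomp,
          evalPath_rel hr]

include hid hcomp in
theorem evalPath_eqvGen {A B : Paths D.TotalObj} {p q : A ⟶ B}
    (h : Relation.EqvGen (@HomRel.CompClosure _ _ D.relO A B) p q) :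
    evalPath p = evalPath q := by
  induction h with
  | rel _ _ hr => exact evalPath_compClosure hid hcomp hr
  | refl => rfl
  | symm _ _ _ ih => exact ih.symm
  | trans _ _ _ _ _ ih₁ ih₂ => exact ih₁.trans ih₂

end

end OpetopeProof

/-- Suppose (as holds for opetopes) that each `O_k` is equivalent to a
discrete category (hom-sets are subsingletons) and that restriction of morphisms of
`O_{k+1}` along face maps is functorial (unique restriction).  Let `x` be a `k`-opetope,
`α` a `(k+1)`-opetope and `γ₁, γ₂ ∈ G_{k+1}` generating face maps `x → α`.  If `γ₁ = γ₂`
as morphisms of `O` then `γ₁ = γ₂` as generators: the relations in `O` do not identify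
distinct generating face maps. -/
theorem face_maps_not_identified (D : OpData)
    (hsub : ∀ (k : ℕ) (a b : D.Obj k), Subsingleton (a ⟶ b))
    (hid : ∀ {k : ℕ} {x : D.Obj k} {α : D.Obj (k + 1)} (γ : D.G k x α),
      D.restr γ (𝟙 α) = ⟨x, 𝟙 x, γ⟩)
    (hcomp : ∀ {k : ℕ} {x : D.Obj k} {α β δ : D.Obj (k + 1)}
      (γ : D.G k x α) (g : α ⟶ β) (g' : β ⟶ δ),
      D.restr γ (g ≫ g') =
        ⟨(D.restr (D.restr γ g).2.2 g').1,
         (D.restr γ g).2.1 ≫ (D.restr (D.restr γ g).2.2 g').2.1,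
         (D.restr (D.restr γ g).2.2 g').2.2⟩)
    {k : ℕ} {x : D.Obj k} {α : D.Obj (k + 1)} (γ₁ γ₂ : D.G k x α)
    (h : (CategoryTheory.Quotient.functor D.relO).map
            (Quiver.Hom.toPath (OpData.Gen.face γ₁)) =
         (CategoryTheory.Quotient.functor D.relO).map
            (Quiver.Hom.toPath (OpData.Gen.face γ₂))) :
    γ₁ = γ₂ := by
  have h0 : (Quot.mk _ (Quiver.Hom.toPath (OpData.Gen.face γ₁)) :
      CategoryTheory.Quotient.Hom D.relO ⟨⟨k, x⟩⟩ ⟨⟨k + 1, α⟩⟩) =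
      Quot.mk _ (Quiver.Hom.toPath (OpData.Gen.face γ₂)) := h
  have h' : Relation.EqvGen
      (@HomRel.CompClosure _ _ D.relO (⟨k, x⟩ : D.TotalObj) ⟨k + 1, α⟩)
      (Quiver.Hom.toPath (OpData.Gen.face γ₁)) (Quiver.Hom.toPath (OpData.Gen.face γ₂)) :=
    Quot.eqvGen_exact h0
  have he := OpetopeProof.evalPath_eqvGen hid hcomp h'
  simp only [OpetopeProof.evalPath, OpetopeProof.evalGen, Quiver.Hom.toPath,
    OpetopeProof.Inv.comp, OpetopeProof.Inv.idI] at he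
  -- `he : Inv.fc (𝟙 x ≫ 𝟙 x) γ₁ = Inv.fc (𝟙 x ≫ 𝟙 x) γ₂` (possibly simplified)
  cases he
  rfl
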